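/- For every integer N ≥ 0 and every nonnegative real sequence (x_i)_{i≥1}, exchanging the order of summation yields the bound Σ_{j=1}^{N} Σ_{i=1}^{j} α_j^i x_i ≤ (1 + 1/H) · Σ_{i=1}^{N} x_i. -/

import Mathlib

open Finset

/-- The learning rate `α_τ = (H+1)/(H+τ)`. -/
noncomputable def lr (H : ℝ) (τ : ℕ) : ℝ := (H + 1) / (H + τ)

/-- The coefficients `α_τ^i`. -/
noncomputable def acoef (H : ℝ) (τ i : ℕ) : ℝ :=
  if i = 0 then ∏ j ∈ Finset.Icc 1 τ, (1 - lr H j)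
  else lr H i * ∏ j ∈ Finset.Icc (i + 1) τ, (1 - lr H j)

lemma hHpos {H : ℝ} (hH : 1 ≤ H) : 0 < H := lt_of_lt_of_le one_pos hH

lemma hHi {H : ℝ} (hH : 1 ≤ H) (i : ℕ) : 0 < H + i := by
  have := hHpos hH; positivity

lemma lr_nonneg {H : ℝ} (hH : 1 ≤ H) (i : ℕ) : 0 ≤ lr H i := by
  unfold lr
  have h1 := hHi hH i
  have := hHpos hH
  positivity

lemma one_sub_lr {H : ℝ} (hH : 1 ≤ H) {k : ℕ} (hk : 1 ≤ k) : 0 ≤ 1 - lr H k := by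
  unfold lr
  rw [sub_nonneg, div_le_one (hHi hH k)]
  have : (1:ℝ) ≤ (k:ℝ) := by exact_mod_cast hk
  linarith

lemma acoef_nonneg {H : ℝ} (hH : 1 ≤ H) {j i : ℕ} (hi : 1 ≤ i) : 0 ≤ acoef H j i := by
  unfold acoef
  rw [if_neg (by omega)]
  apply mul_nonneg (lr_nonneg hH i)
  apply Finset.prod_nonneg
  intro k hk
  exact one_sub_lr hH (by simp [Finset.mem_Icc] at hk; omega)

lemma acoef_step {H : ℝ} (hH : 1 ≤ H) {i j : ℕ} (hi : 1 ≤ i) (hj : i + 1 ≤ j) :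
    acoef H j i = ((i : ℝ) / (H + i)) * acoef H j (i + 1) := by
  unfold acoef
  rw [if_neg (by omega), if_neg (by omega)]
  have hsplit : Finset.Icc (i + 1) j = insert (i + 1) (Finset.Icc (i + 2) j) := by
    rw [← Finset.Ioc_insert_left hj, ← Finset.Icc_add_one_left_eq_Ioc (i + 1) j]; rfl
  rw [hsplit, Finset.prod_insert (by simp)]
  have h1 := hHi hH i
  have h2 := hHi hH (i + 1)
  have h0 := hHpos hH
  have key : lr H i * (1 - lr H (i + 1)) = ((i : ℝ) / (H + i)) * lr H (i + 1) := by
    unfold lr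
    push_cast
    field_simp
    ring
  push_cast at key ⊢
  nlinarith [key, Finset.prod_nonneg (fun k hk => one_sub_lr hH (show 1 ≤ k by
    simp [Finset.mem_Icc] at hk; omega) : ∀ k ∈ Finset.Icc (i+2) j, 0 ≤ 1 - lr H k)]

lemma acoef_sum_bound {H : ℝ} (hH : 1 ≤ H) (d : ℕ) :
    ∀ i, 1 ≤ i → ∑ j ∈ Finset.Icc i (i + d), acoef H j i ≤ 1 + 1 / H := by
  have h0 := hHpos hH
  induction d with
  | zero =>
    intro i hi
    simp only [Nat.add_zero, Finset.Icc_self, Finset.sum_singleton]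
    unfold acoef
    rw [if_neg (by omega)]
    rw [Finset.Icc_eq_empty_of_lt (show i < i + 1 by omega), Finset.prod_empty, mul_one]
    unfold lr
    rw [div_le_iff₀ (hHi hH i)]
    have hci : (1:ℝ) ≤ (i:ℝ) := by exact_mod_cast hi
    have : 1 + 1 / H = (H + 1) / H := by field_simp
    rw [this, div_mul_eq_mul_div, le_div_iff₀ h0]
    nlinarith
  | succ d ih =>
    intro i hi
    have hsplit : Finset.Icc i (i + (d + 1)) = insert i (Finset.Icc (i + 1) (i + 1 + d)) := by
      rw [show i + 1 + d = i + (d + 1) by omega, ← Finset.Ioc_insert_left (by omega),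
        Finset.Icc_add_one_left_eq_Ioc]
    rw [hsplit, Finset.sum_insert (by simp)]
    have hrw : ∑ j ∈ Finset.Icc (i + 1) (i + 1 + d), acoef H j i
        = ((i : ℝ) / (H + i)) * ∑ j ∈ Finset.Icc (i + 1) (i + 1 + d), acoef H j (i + 1) := by
      rw [Finset.mul_sum]
      apply Finset.sum_congr rfl
      intro j hj
      simp only [Finset.mem_Icc] at hj
      exact acoef_step hH hi hj.1
    rw [hrw]
    have hIH := ih (i + 1) (by omega)
    have hii : (0:ℝ) ≤ (i : ℝ) / (H + i) := by
      have := hHi hH i; positivity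
    have h1 : ((i : ℝ) / (H + i)) * ∑ j ∈ Finset.Icc (i + 1) (i + 1 + d), acoef H j (i + 1)
        ≤ ((i : ℝ) / (H + i)) * (1 + 1 / H) := by
      exact mul_le_mul_of_nonneg_left hIH hii
    have hacii : acoef H i i = lr H i := by
      unfold acoef
      rw [if_neg (by omega), Finset.Icc_eq_empty_of_lt (by omega), Finset.prod_empty, mul_one]
    rw [hacii]
    have hfinal : lr H i + ((i : ℝ) / (H + i)) * (1 + 1 / H) = 1 + 1 / H := by
      unfold lr
      have := hHi hH i
      field_simp
    linarith
  
lemma acoef_sum_bound' {H : ℝ} (hH : 1 ≤ H) (i N : ℕ) (hi : 1 ≤ i) :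
    ∑ j ∈ Finset.Icc i N, acoef H j i ≤ 1 + 1 / H := by
  have h0 := hHpos hH
  rcases le_or_gt i N with h | h
  · have : N = i + (N - i) := by omega
    rw [this]
    exact acoef_sum_bound hH (N - i) i hi
  · rw [Finset.Icc_eq_empty_of_lt h, Finset.sum_empty]
    positivity

theorem stmt_14 (H : ℝ) (hH : 1 ≤ H) (N : ℕ) (x : ℕ → ℝ) (hx : ∀ i, 1 ≤ i → 0 ≤ x i) :
    ∑ j ∈ Finset.Icc 1 N, ∑ i ∈ Finset.Icc 1 j, acoef H j i * x i ≤
      (1 + 1 / H) * ∑ i ∈ Finset.Icc 1 N, x i := by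
  have hswap : ∑ j ∈ Finset.Icc 1 N, ∑ i ∈ Finset.Icc 1 j, acoef H j i * x i
      = ∑ i ∈ Finset.Icc 1 N, ∑ j ∈ Finset.Icc i N, acoef H j i * x i := by
    rw [Finset.sum_comm' (s' := fun i => Finset.Icc i N) (t' := Finset.Icc 1 N)]
    intro j i
    simp only [Finset.mem_Icc]
    omega
  rw [hswap, Finset.mul_sum]
  apply Finset.sum_le_sum
  intro i hi
  simp only [Finset.mem_Icc] at hi
  rw [← Finset.sum_mul]
  calc (∑ j ∈ Finset.Icc i N, acoef H j i) * x i ≤ (1 + 1 / H) * x i := by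
        exact mul_le_mul_of_nonneg_right (acoef_sum_bound' hH i N hi.1) (hx i hi.1)
    _ = (1 + 1 / H) * x i := rfl
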